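/- Let r : ℝ → ℝ be concave, let b : Fin l → ℝ be monotone arrival times, and let s : Fin l → ℝ be strictly monotone service times with b i ≤ s k for all i, k. Then for every permutation π of Fin l, ∑_{k} r (s k − b (π k)) ≤ ∑_{k} r (s k − b k). That is, among all ways to match a fixed set of l requests to l service slots, matching them in order of arrival (earliest-arrived request to earliest slot) maximizes the cumulative reward. -/

import Mathlib

lemma concave_pair_ineq (r : ℝ → ℝ) (hr : ConcaveOn ℝ Set.univ r)
    {x y m₁ m₂ : ℝ} (h1 : x ≤ m₁) (h2 : m₁ ≤ y) (h3 : x ≤ m₂)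
    (hsum : m₁ + m₂ = x + y) :
    r x + r y ≤ r m₁ + r m₂ := by
  rcases eq_or_lt_of_le (h1.trans h2) with h | hxy
  · have hm1 : m₁ = x := le_antisymm (h ▸ h2) h1
    have hm2 : m₂ = y := by linarith
    simp [hm1, hm2, add_comm]
  · set lam : ℝ := (y - m₁) / (y - x) with hlam
    have hyx : (0:ℝ) < y - x := by linarith
    have hl0 : 0 ≤ lam := div_nonneg (by linarith) hyx.le
    have hl1 : lam ≤ 1 := by
      rw [div_le_one hyx]; linarith
    have e1 : lam * x + (1 - lam) * y = m₁ := by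
      rw [hlam, div_mul_eq_mul_div, one_sub_div hyx.ne', div_mul_eq_mul_div, ← add_div,
        div_eq_iff hyx.ne']; ring
    have e2 : (1 - lam) * x + lam * y = m₂ := by
      have : m₂ = x + y - m₁ := by linarith
      rw [this, ← e1]; ring
    have c1 : lam • r x + (1 - lam) • r y ≤ r (lam • x + (1 - lam) • y) :=
      hr.2 (Set.mem_univ x) (Set.mem_univ y) hl0 (by linarith) (by ring)
    have c2 : (1 - lam) • r x + lam • r y ≤ r ((1 - lam) • x + lam • y) :=
      hr.2 (Set.mem_univ x) (Set.mem_univ y) (by linarith) hl0 (by ring)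
    simp only [smul_eq_mul] at c1 c2
    rw [e1] at c1
    rw [e2] at c2
    nlinarith

lemma concave_swap_ineq (r : ℝ → ℝ) (hr : ConcaveOn ℝ Set.univ r)
    {t₁ t₂ a₁ a₂ : ℝ} (ht : t₁ ≤ t₂) (ha : a₁ ≤ a₂) :
    r (t₂ - a₁) + r (t₁ - a₂) ≤ r (t₁ - a₁) + r (t₂ - a₂) := by
  have := concave_pair_ineq r hr (x := t₁ - a₂) (y := t₂ - a₁)
    (m₁ := t₁ - a₁) (m₂ := t₂ - a₂) (by linarith) (by linarith) (by linarith) (by ring)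
  linarith

/-- In-order serving is optimal (Appendix B.1): with a concave reward function
`r`, monotone arrival times `b : Fin l → ℝ`, strictly increasing service times
`s : Fin l → ℝ`, and every arrival preceding every service time, matching
requests to slots in order of arrival maximizes the cumulative reward over all
permutations `π` of `Fin l`. -/
theorem serving_in_order_optimal
    (l : ℕ)
    (r : ℝ → ℝ) (hr : ConcaveOn ℝ Set.univ r)
    (b : Fin l → ℝ) (hb : Monotone b)
    (s : Fin l → ℝ) (hs : StrictMono s)
    (hbs : ∀ (i : Fin l) (k : Fin l), b i ≤ s k)
    (π : Equiv.Perm (Fin l)) :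
    ∑ k : Fin l, r (s k - b (π k)) ≤ ∑ k : Fin l, r (s k - b k) := by
  clear hbs
  induction l with
  | zero => simp
  | succ n ih =>
    set j : Fin (n + 1) := π⁻¹ 0 with hj
    set π' : Equiv.Perm (Fin (n + 1)) := π * Equiv.swap 0 j with hπ'
    have hπ'0 : π' 0 = 0 := by
      simp [hπ', hj, Equiv.swap_apply_left]
    -- step 1: moving the earliest request to slot 0 doesn't decrease the sum
    have step1 : ∑ k : Fin (n+1), r (s k - b (π k)) ≤
        ∑ k : Fin (n+1), r (s k - b (π' k)) := by
      rcases eq_or_ne j 0 with hj0 | hj0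
      · apply le_of_eq
        apply Finset.sum_congr rfl
        intro k _
        simp [hπ', ← hj0, Equiv.swap_self]
      · have hπ'j : π' j = π 0 := by simp [hπ', Equiv.swap_apply_right]
        have hπj : π j = 0 := by simp [hj]
        have hrest : ∀ k, k ≠ 0 → k ≠ j → π' k = π k := by
          intro k hk0 hkj
          simp [hπ', Equiv.swap_apply_of_ne_of_ne hk0 hkj]
        have h0mem : (0 : Fin (n+1)) ∈ Finset.univ.erase j :=
          Finset.mem_erase.2 ⟨Ne.symm hj0, Finset.mem_univ _⟩
        rw [← Finset.add_sum_erase _ _ (Finset.mem_univ j),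
            ← Finset.add_sum_erase _ _ h0mem,
            ← Finset.add_sum_erase _ (fun k => r (s k - b (π' k))) (Finset.mem_univ j),
            ← Finset.add_sum_erase _ (fun k => r (s k - b (π' k))) h0mem]
        have hsum_eq : ∑ k ∈ (Finset.univ.erase j).erase 0, r (s k - b (π k)) =
            ∑ k ∈ (Finset.univ.erase j).erase 0, r (s k - b (π' k)) := by
          apply Finset.sum_congr rfl
          intro k hk
          rw [Finset.mem_erase, Finset.mem_erase] at hk
          rw [hrest k hk.1 hk.2.1]
        rw [hπ'j, hπ'0, hπj]
        have h0j : (0 : Fin (n+1)) < j := by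
          rcases lt_or_eq_of_le (Fin.zero_le j) with h | h
          · exact h
          · exact absurd h.symm hj0
        have hbmono : b 0 ≤ b (π 0) := hb (Fin.zero_le _)
        have := concave_swap_ineq r hr (t₁ := s 0) (t₂ := s j)
          (a₁ := b 0) (a₂ := b (π 0)) (hs h0j).le hbmono
        linarith [hsum_eq, this]
    refine step1.trans ?_
    -- step 2: restrict π' to Fin n and apply induction hypothesis
    have hne : ∀ k : Fin n, π' k.succ ≠ 0 := by
      intro k h
      have : π' k.succ = π' 0 := by rw [h, hπ'0]
      exact Fin.succ_ne_zero k (π'.injective this)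
    set σf : Fin n → Fin n := fun k => (π' k.succ).pred (hne k) with hσf
    have hσinj : Function.Injective σf := by
      intro a c h
      have h2 : π' a.succ = π' c.succ := by
        have := congrArg Fin.succ h
        simpa only [hσf, Fin.succ_pred] using this
      exact Fin.succ_injective _ (π'.injective h2)
    set σ : Equiv.Perm (Fin n) :=
      Equiv.ofBijective σf (Finite.injective_iff_bijective.1 hσinj) with hσ
    have hσap : ∀ k : Fin n, (σ k).succ = π' k.succ := by
      intro k
      simp [hσ, Equiv.ofBijective_apply, hσf, Fin.succ_pred]
    have ihap := ih (fun i => b i.succ) (fun i k hik => hb (Fin.succ_le_succ_iff.2 hik))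
      (fun i => s i.succ) (fun i k hik => hs (Fin.succ_lt_succ_iff.2 hik)) σ
    rw [Fin.sum_univ_succ, Fin.sum_univ_succ, hπ'0]
    refine add_le_add (le_refl _) ?_
    calc ∑ i : Fin n, r (s i.succ - b (π' i.succ))
        = ∑ i : Fin n, r (s i.succ - b (σ i).succ) := by
          apply Finset.sum_congr rfl; intro i _; rw [hσap]
      _ ≤ ∑ i : Fin n, r (s i.succ - b i.succ) := ihap
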